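/- Let q be an odd prime power, A the Bose–Chowla Sidon set in Z/(q^2−1)Z, and G the associated sum graph. If i and j are distinct absolute points (2i, 2j ∈ A), then i and j have a common neighbor if and only if i ≠ j + (q^2−1)/2. -/

import Mathlib

section BoseChowlaAux

variable {K : Type*} [Field K] (F : Subfield K) (θ : Kˣ) (N : ℕ)

/-- powers of θ at the K level only depend on the exponent mod N. -/
lemma bc_pow_mod (hord : orderOf θ = N) {m n : ℕ} (h : m ≡ n [MOD N]) :
    (θ : K) ^ m = (θ : K) ^ n := by
  have hu : θ ^ m = θ ^ n := pow_eq_pow_iff_modEq.2 (by rw [hord]; exact h)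
  calc (θ : K) ^ m = ((θ ^ m : Kˣ) : K) := (Units.val_pow_eq_pow_val θ m).symm
    _ = ((θ ^ n : Kˣ) : K) := by rw [hu]
    _ = (θ : K) ^ n := Units.val_pow_eq_pow_val θ n

lemma bc_pow_inj [NeZero N] (hord : orderOf θ = N) {a b : ZMod N}
    (h : (θ : K) ^ a.val = (θ : K) ^ b.val) : a = b := by
  have hu : θ ^ a.val = θ ^ b.val := Units.ext (by
    simpa [Units.val_pow_eq_pow_val] using h)
  have hmod : a.val ≡ b.val [MOD N] := by
    have := pow_eq_pow_iff_modEq.1 hu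
    rwa [hord] at this
  have : a.val = b.val := by
    have ha := ZMod.val_lt a
    have hb := ZMod.val_lt b
    unfold Nat.ModEq at hmod
    rwa [Nat.mod_eq_of_lt ha, Nat.mod_eq_of_lt hb] at hmod
  exact ZMod.val_injective N this

lemma bc_pow_add [NeZero N] (hord : orderOf θ = N) (a b : ZMod N) :
    (θ : K) ^ (a + b).val = (θ : K) ^ a.val * (θ : K) ^ b.val := by
  rw [← pow_add]
  exact bc_pow_mod θ N hord (by
    rw [ZMod.val_add]; exact Nat.mod_modEq _ _)

/-- Sidon uniqueness: two pairs from the Bose–Chowla set with the same nonzero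
difference are equal (in the first component, hence both). -/
lemma bc_uniq [NeZero N] (hord : orderOf θ = N) (hθF : (θ : K) ∉ F)
    {a b a' b' d : ZMod N} (hd : d ≠ 0)
    (ha : (θ : K) ^ a.val - θ ∈ F) (hb : (θ : K) ^ b.val - θ ∈ F)
    (ha' : (θ : K) ^ a'.val - θ ∈ F) (hb' : (θ : K) ^ b'.val - θ ∈ F)
    (h1 : a - b = d) (h2 : a' - b' = d) : a = a' ∧ b = b' := by
  have hab : a = d + b := by rw [← h1]; ring
  have hab' : a' = d + b' := by rw [← h2]; ring
  set g : K := (θ : K) ^ d.val with hg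
  have e1 : (θ : K) ^ a.val = g * (θ : K) ^ b.val := by
    rw [hab]; exact bc_pow_add θ N hord d b
  have e1' : (θ : K) ^ a'.val = g * (θ : K) ^ b'.val := by
    rw [hab']; exact bc_pow_add θ N hord d b'
  by_cases hbb : (θ : K) ^ b.val = (θ : K) ^ b'.val
  · have hb_eq : b = b' := bc_pow_inj θ N hord hbb
    refine ⟨?_, hb_eq⟩
    rw [hab, hab', hb_eq]
  · exfalso
    -- g = (difference of a's) / (difference of b's) ∈ F
    have hsub : ((θ : K) ^ a.val - θ) - ((θ : K) ^ a'.val - θ)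
        = g * (((θ : K) ^ b.val - θ) - ((θ : K) ^ b'.val - θ)) := by
      rw [e1, e1']; ring
    have hne : ((θ : K) ^ b.val - θ) - ((θ : K) ^ b'.val - θ) ≠ 0 := by
      intro h0
      exact hbb (by linear_combination h0)
    have hgF : g ∈ F := by
      have : g = (((θ : K) ^ a.val - θ) - ((θ : K) ^ a'.val - θ)) /
          (((θ : K) ^ b.val - θ) - ((θ : K) ^ b'.val - θ)) := by
        rw [eq_div_iff hne]
        linear_combination -hsub
      rw [this]
      exact F.div_mem (F.sub_mem ha ha') (F.sub_mem hb hb')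
    -- then (g - 1) * θ ∈ F, forcing g = 1, i.e. d = 0
    have hg1 : g ≠ 1 := by
      intro h1g
      apply hd
      have : (θ : K) ^ d.val = (θ : K) ^ (0 : ZMod N).val := by
        rw [← hg, h1g, ZMod.val_zero, pow_zero]
      exact bc_pow_inj θ N hord this
    have hmem : (g - 1) * θ ∈ F := by
      have : (g - 1) * θ = ((θ : K) ^ a.val - θ) - g * ((θ : K) ^ b.val - θ) := by
        rw [e1]; ring
      rw [this]
      exact F.sub_mem ha (F.mul_mem hgF hb)
    have : (θ : K) ∈ F := by
      have hne1 : g - 1 ≠ 0 := sub_ne_zero.2 hg1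
      have : (θ : K) = (g - 1)⁻¹ * ((g - 1) * θ) := by field_simp
      rw [this]
      exact F.mul_mem (F.inv_mem (F.sub_mem hgF F.one_mem)) hmem
    exact hθF this

/-- Existence: any difference d with θ^d ∉ F is realized by a pair from the
Bose–Chowla set. -/
lemma bc_exists [NeZero N] (hord : orderOf θ = N) (hθF : (θ : K) ∉ F)
    (hθgen : ∀ x : Kˣ, ∃ m : ℕ, θ ^ m = x)
    (hrepr : ∀ g : K, ∃ u v : K, u ∈ F ∧ v ∈ F ∧ g = u + v * θ)
    (d : ZMod N) (hdF : (θ : K) ^ d.val ∉ F) :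
    ∃ a b : ZMod N, (θ : K) ^ a.val - θ ∈ F ∧ (θ : K) ^ b.val - θ ∈ F ∧ a - b = d := by
  obtain ⟨u, v, hu, hv, hg⟩ := hrepr ((θ : K) ^ d.val)
  have hv0 : v ≠ 0 := by
    intro h0
    apply hdF
    rw [hg, h0, zero_mul, add_zero]; exact hu
  obtain ⟨w, s, hw, hs, hθ2⟩ := hrepr ((θ : K) * θ)
  set c : K := (1 - u - v * s) / v with hc_def
  have hc : c ∈ F := F.div_mem (F.sub_mem (F.sub_mem F.one_mem hu) (F.mul_mem hv hs)) hv
  have hvc : v * c = 1 - u - v * s := by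
    rw [hc_def]; field_simp
  have hx0 : (θ : K) + c ≠ 0 := by
    intro h0
    apply hθF
    have : (θ : K) = -c := by linear_combination h0
    rw [this]; exact F.neg_mem hc
  obtain ⟨m, hm⟩ := hθgen (Units.mk0 ((θ : K) + c) hx0)
  set b : ZMod N := (m : ZMod N) with hb_def
  have hbx : (θ : K) ^ b.val = (θ : K) + c := by
    have h1 : (θ : K) ^ m = (θ : K) + c := by
      have := congrArg (Units.val) hm
      simpa [Units.val_pow_eq_pow_val] using this
    have h2 : (θ : K) ^ b.val = (θ : K) ^ m := by
      apply bc_pow_mod θ N hord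
      rw [hb_def, ZMod.val_natCast]
      exact Nat.mod_modEq m N
    rw [h2, h1]
  refine ⟨d + b, b, ?_, ?_, by ring⟩
  · rw [bc_pow_add θ N hord d b, hbx]
    have key : (θ : K) ^ d.val * ((θ : K) + c) - θ = u * c + v * w := by
      rw [hg]
      linear_combination ((θ : K)) * hvc + v * hθ2
    rw [key]
    exact F.add_mem (F.mul_mem hu hc) (F.mul_mem hv hw)
  · rw [hbx]
    simpa using hc

/-- No pair from the Bose–Chowla set has difference N/2. -/
lemma bc_no_half [NeZero N] (hord : orderOf θ = N) (hθF : (θ : K) ∉ F)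
    (hNeven : 2 * (N / 2) = N) (hN2 : 2 ≤ N)
    {a b : ZMod N}
    (ha : (θ : K) ^ a.val - θ ∈ F) (hb : (θ : K) ^ b.val - θ ∈ F)
    (hab : a - b = ((N / 2 : ℕ) : ZMod N)) : False := by
  set half : ZMod N := ((N / 2 : ℕ) : ZMod N) with hhalf
  have hhv : half.val = N / 2 := by
    rw [hhalf]
    exact ZMod.val_cast_of_lt (by omega)
  set g : K := (θ : K) ^ half.val with hg
  have hgg : g * g = 1 := by
    rw [hg, ← pow_add]
    have : (θ : K) ^ (half.val + half.val) = (θ : K) ^ 0 :=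
      bc_pow_mod θ N hord (by
        rw [hhv]
        show N / 2 + N / 2 ≡ 0 [MOD N]
        have : N / 2 + N / 2 = N := by omega
        rw [this]
        exact (Nat.modEq_zero_iff_dvd).2 dvd_rfl)
    simpa using this
  have hg1 : g ≠ 1 := by
    intro h1
    have : half = 0 := by
      apply bc_pow_inj θ N hord
      rw [← hg, h1, ZMod.val_zero, pow_zero]
    have := congrArg ZMod.val this
    rw [hhv, ZMod.val_zero] at this
    omega
  have hgneg : g = -1 := (mul_self_eq_one_iff.1 hgg).resolve_left hg1
  have h2ne : (2 : K) ≠ 0 := by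
    intro h2
    apply hg1
    rw [hgneg]
    linear_combination -h2
  have hab' : a = half + b := by rw [← hab]; ring
  have e1 : (θ : K) ^ a.val = g * (θ : K) ^ b.val := by
    rw [hab']; exact bc_pow_add θ N hord half b
  have hmem : (-2 : K) * (θ : K) ^ b.val ∈ F := by
    have : (-2 : K) * (θ : K) ^ b.val
        = ((θ : K) ^ a.val - θ) - ((θ : K) ^ b.val - θ) := by
      rw [e1, hgneg]; ring
    rw [this]
    exact F.sub_mem ha hb
  have hxF : (θ : K) ^ b.val ∈ F := by
    have hne : (-2 : K) ≠ 0 := by simpa using h2ne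
    have : (θ : K) ^ b.val = (-2 : K)⁻¹ * ((-2 : K) * (θ : K) ^ b.val) := by
      field_simp
    rw [this]
    refine F.mul_mem (F.inv_mem ?_) hmem
    have : (-2 : K) = -(1 + 1) := by norm_num
    rw [this]
    exact F.neg_mem (F.add_mem F.one_mem F.one_mem)
  exact hθF (by
    have : (θ : K) = (θ : K) ^ b.val - ((θ : K) ^ b.val - θ) := by ring
    rw [this]
    exact F.sub_mem hxF hb)

end BoseChowlaAux

/-- Two distinct absolute points of the Bose–Chowla sum graph have a common
neighbor iff they are not antipodal. -/
theorem stmt_9 (q : ℕ) (hq : ∃ p n : ℕ, p.Prime ∧ 0 < n ∧ q = p ^ n) (hodd : Odd q)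
    {K : Type*} [Field K] (hK : Nat.card K = q ^ 2)
    (F : Subfield K) (hF : Nat.card F = q)
    (θ : Kˣ) (hθ : ∀ x : Kˣ, x ∈ Subgroup.zpowers θ)
    (A : Set (ZMod (q ^ 2 - 1)))
    (hA : A = {a : ZMod (q ^ 2 - 1) | ((θ : K) ^ a.val - (θ : K)) ∈ F})
    (G : SimpleGraph (ZMod (q ^ 2 - 1)))
    (hG : ∀ i j, G.Adj i j ↔ i ≠ j ∧ i + j ∈ A)
    (i j : ZMod (q ^ 2 - 1)) (hij : i ≠ j)
    (hi : 2 * i ∈ A) (hj : 2 * j ∈ A) :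
    (∃ k, G.Adj i k ∧ G.Adj j k) ↔
      i ≠ j + (((q ^ 2 - 1) / 2 : ℕ) : ZMod (q ^ 2 - 1)) := by
  subst hA
  simp only [Set.mem_setOf_eq] at hi hj
  -- basic numerology
  have hq3 : 3 ≤ q := by
    obtain ⟨p, n, hp, hn, rfl⟩ := hq
    have hpodd : p ≠ 2 := by
      rintro rfl
      rw [← Nat.not_even_iff_odd] at hodd
      exact hodd ((Nat.even_pow).2 ⟨even_two, hn.ne'⟩)
    have hp3 : 3 ≤ p := by
      have := hp.two_le
      omega
    calc 3 ≤ p := hp3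
      _ ≤ p ^ n := Nat.le_self_pow hn.ne' p
  have hq2 : 9 ≤ q ^ 2 := by
    calc 9 = 3 ^ 2 := by norm_num
      _ ≤ q ^ 2 := Nat.pow_le_pow_left hq3 2
  have hN8 : 8 ≤ q ^ 2 - 1 := by omega
  haveI : NeZero (q ^ 2 - 1) := ⟨by omega⟩
  have hNeven : 2 * ((q ^ 2 - 1) / 2) = q ^ 2 - 1 := by
    obtain ⟨r, hr⟩ := hodd
    have : q ^ 2 = 2 * (2 * r ^ 2 + 2 * r) + 1 := by subst hr; ring
    omega
  -- finiteness and cardinalities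
  haveI hKfin : Finite K := Nat.finite_of_card_ne_zero (by omega)
  haveI : Finite Kˣ := Finite.of_injective (Units.val) (fun a b h => Units.ext h)
  have hcardU : Nat.card Kˣ = q ^ 2 - 1 := by
    rw [Nat.card_units, hK]
  have hord : orderOf θ = q ^ 2 - 1 := by
    rw [orderOf_eq_card_of_forall_mem_zpowers hθ, hcardU]
  -- θ ∉ F
  have hθF : (θ : K) ∉ F := by
    intro hmem
    have hall : ∀ x : K, x ∈ F := by
      intro x
      rcases eq_or_ne x 0 with rfl | hx0
      · exact F.zero_mem
      · obtain ⟨k, hk⟩ := hθ (Units.mk0 x hx0)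
        have hk' : θ ^ k = Units.mk0 x hx0 := hk
        have : ((θ ^ k : Kˣ) : K) = x := by rw [hk']; rfl
        rw [← this, Units.val_zpow_eq_zpow_val]
        exact zpow_mem hmem k
    have hbij : Function.Bijective ((↑) : F → K) :=
      ⟨Subtype.val_injective, fun x => ⟨⟨x, hall x⟩, rfl⟩⟩
    have := Nat.card_eq_of_bijective _ hbij
    rw [hF, hK] at this
    have hqq : q ^ 2 = q * q := by ring
    have : 3 * q ≤ q * q := Nat.mul_le_mul_right q hq3
    omega
  -- {1, θ} spans K over F
  haveI hFfin : Finite F := Nat.finite_of_card_ne_zero (by omega)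
  have hrepr : ∀ g : K, ∃ u v : K, u ∈ F ∧ v ∈ F ∧ g = u + v * θ := by
    have hinj : Function.Injective (fun p : F × F => (p.1 : K) + (p.2 : K) * θ) := by
      rintro ⟨u, v⟩ ⟨u', v'⟩ h
      simp only at h
      have hv : (v : K) = (v' : K) := by
        by_contra hne
        apply hθF
        have hvv : (v : K) - (v' : K) ≠ 0 := sub_ne_zero.2 hne
        have : (θ : K) = ((u' : K) - (u : K)) * ((v : K) - (v' : K))⁻¹ := by
          field_simp
          linear_combination h
        rw [this]
        exact F.mul_mem (F.sub_mem u'.2 u.2) (F.inv_mem (F.sub_mem v.2 v'.2))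
      have hu : (u : K) = (u' : K) := by
        rw [hv] at h
        linear_combination h
      exact Prod.ext (Subtype.ext hu) (Subtype.ext hv)
    have hcard : Nat.card (F × F) = Nat.card K := by
      rw [Nat.card_prod, hF, hK]; ring
    have hbij := (Nat.bijective_iff_injective_and_card
      (fun p : F × F => (p.1 : K) + (p.2 : K) * θ)).2 ⟨hinj, hcard⟩
    intro g
    obtain ⟨⟨u, v⟩, huv⟩ := hbij.2 g
    exact ⟨u, v, u.2, v.2, huv.symm⟩
  have hθgen : ∀ x : Kˣ, ∃ m : ℕ, θ ^ m = x := by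
    intro x
    have := mem_powers_iff_mem_zpowers.2 (hθ x)
    exact (Submonoid.mem_powers_iff x θ).1 this
  set half : ZMod (q ^ 2 - 1) := (((q ^ 2 - 1) / 2 : ℕ) : ZMod (q ^ 2 - 1)) with hhalf
  constructor
  · -- common neighbor → not antipodal
    rintro ⟨k, hik, hjk⟩ hanti
    obtain ⟨hik1, hik2⟩ := (hG i k).1 hik
    obtain ⟨hjk1, hjk2⟩ := (hG j k).1 hjk
    simp only [Set.mem_setOf_eq] at hik2 hjk2
    refine bc_no_half F θ (q ^ 2 - 1) hord hθF hNeven (by omega) hik2 hjk2 ?_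
    show (i + k) - (j + k) = half
    rw [hanti]; ring
  · -- not antipodal → common neighbor
    intro hanti
    set d : ZMod (q ^ 2 - 1) := i - j with hd_def
    have hd0 : d ≠ 0 := fun h => hij (by
      have : i - j = 0 := h
      linear_combination this)
    -- θ^d ∉ F
    have hdF : (θ : K) ^ d.val ∉ F := by
      intro hgF
      set g : K := (θ : K) ^ d.val with hg
      have h2i : 2 * i = (d + d) + 2 * j := by rw [hd_def]; ring
      have e1 : (θ : K) ^ (2 * i).val = g * g * (θ : K) ^ (2 * j).val := by
        rw [h2i, bc_pow_add θ (q ^ 2 - 1) hord (d + d) (2 * j),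
          bc_pow_add θ (q ^ 2 - 1) hord d d]
      have hgg : g * g = 1 := by
        by_contra hne
        have hmem : (g * g - 1) * (θ : K) ^ (2 * j).val ∈ F := by
          have : (g * g - 1) * (θ : K) ^ (2 * j).val
              = ((θ : K) ^ (2 * i).val - θ) - ((θ : K) ^ (2 * j).val - θ) := by
            rw [e1]; ring
          rw [this]
          exact F.sub_mem hi hj
        have hxF : (θ : K) ^ (2 * j).val ∈ F := by
          have hne' : g * g - 1 ≠ 0 := sub_ne_zero.2 hne
          have : (θ : K) ^ (2 * j).val
              = (g * g - 1)⁻¹ * ((g * g - 1) * (θ : K) ^ (2 * j).val) := by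
            rw [← mul_assoc, inv_mul_cancel₀ hne', one_mul]
          rw [this]
          exact F.mul_mem (F.inv_mem (F.sub_mem (F.mul_mem hgF hgF) F.one_mem)) hmem
        apply hθF
        have : (θ : K) = (θ : K) ^ (2 * j).val - ((θ : K) ^ (2 * j).val - θ) := by
          ring
        rw [this]
        exact F.sub_mem hxF hj
      -- g*g = 1 forces d + d = 0, hence d = half, contradiction
      have hdd : d + d = 0 := by
        apply bc_pow_inj θ (q ^ 2 - 1) hord
        rw [ZMod.val_zero, pow_zero]
        rw [bc_pow_add θ (q ^ 2 - 1) hord d d]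
        exact hgg
      have hval : (d.val + d.val) % (q ^ 2 - 1) = 0 := by
        have := congrArg ZMod.val hdd
        rwa [ZMod.val_add, ZMod.val_zero] at this
      obtain ⟨c, hc⟩ := Nat.dvd_of_mod_eq_zero hval
      have hdlt := ZMod.val_lt d
      have hdne : d.val ≠ 0 := fun h => hd0 ((ZMod.val_eq_zero d).1 h)
      have hc1 : c = 1 := by
        rcases Nat.lt_or_ge c 2 with h2 | h2
        · interval_cases c <;> omega
        · have : (q ^ 2 - 1) * 2 ≤ (q ^ 2 - 1) * c := Nat.mul_le_mul_left _ h2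
          omega
      rw [hc1, Nat.mul_one] at hc
      have hdval : d.val = (q ^ 2 - 1) / 2 := by omega
      apply hanti
      have hdh : d = half := by
        apply ZMod.val_injective
        rw [hdval, hhalf, ZMod.val_cast_of_lt (by omega)]
      rw [← hdh, hd_def]
      ring
    obtain ⟨a, b, hamem, hbmem, hab⟩ :=
      bc_exists F θ (q ^ 2 - 1) hord hθF hθgen hrepr d hdF
    set k : ZMod (q ^ 2 - 1) := a - i with hk_def
    have hik : i + k = a := by rw [hk_def]; ring
    have hjk : j + k = b := by
      rw [hd_def] at hab
      rw [hk_def]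
      linear_combination hab
    have hki : k ≠ i := by
      intro hki
      -- then a = 2i, b = i + j, and (b, 2j) is another pair with difference d
      have hb_eq : b = i + j := by
        rw [← hjk, hki]; ring
      have hb2j : b - 2 * j = d := by
        rw [hb_eq, hd_def]; ring
      have := bc_uniq F θ (q ^ 2 - 1) hord hθF hd0 hamem hbmem hbmem hj hab hb2j
      exact hd0 (by rw [← hab, this.1]; ring)
    have hkj : k ≠ j := by
      intro hkj
      -- then a = i + j, and (2i, a) is another pair with difference d
      have ha_eq : a = i + j := by
        rw [← hik, hkj]
      have h2ia : 2 * i - a = d := by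
        rw [ha_eq, hd_def]; ring
      have := bc_uniq F θ (q ^ 2 - 1) hord hθF hd0 hi hamem hamem hbmem h2ia hab
      exact hd0 (by rw [← hab, this.2]; ring)
    refine ⟨k, (hG i k).2 ⟨fun h => hki h.symm, ?_⟩, (hG j k).2 ⟨fun h => hkj h.symm, ?_⟩⟩
    · simp only [Set.mem_setOf_eq]
      rw [hik]
      exact hamem
    · simp only [Set.mem_setOf_eq]
      rw [hjk]
      exact hbmem
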